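/- Let d, m ≥ 1 and n = dm. If η ∈ ℤ/dℤ has order strictly smaller than d, then for every (σ_1, …, σ_d) ∈ (S_m)^d the element (σ_1, …, σ_d)·η of G = (S_m)^d ⋊ ℤ/dℤ has a nonzero fixed vector in V, i.e. it is not elliptic. -/

import Mathlib

/-- The wreath product `(S_m)^d ⋊ ℤ/dℤ`, realized concretely as the subgroup of permutations
of the `n = d·m` coordinates (indexed by pairs `(i,j)` with `i : ZMod d` the block index and
`j : Fin m` the position within the block) that shift the block index by a constant amount. -/
def wrG (d m : ℕ) : Subgroup (Equiv.Perm (ZMod d × Fin m)) where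
  carrier := {π | ∃ a : ZMod d, ∀ p : ZMod d × Fin m, (π p).1 = p.1 + a}
  one_mem' := ⟨0, fun p => by simp⟩
  mul_mem' := by
    rintro π σ ⟨a, ha⟩ ⟨b, hb⟩
    refine ⟨b + a, fun p => ?_⟩
    have : (π * σ) p = π (σ p) := rfl
    rw [this, ha, hb, add_assoc]
  inv_mem' := by
    rintro π ⟨a, ha⟩
    refine ⟨-a, fun p => ?_⟩
    have h1 := ha (π⁻¹ p)
    rw [← Equiv.Perm.mul_apply, mul_inv_cancel, Equiv.Perm.one_apply] at h1
    rw [h1, add_neg_cancel_right]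

/-- The element `(σ_1, …, σ_d)·ξ^a` of the wreath product `(S_m)^d ⋊ ℤ/dℤ` (here with blocks
indexed by `ZMod d`): it sends the coordinate `(i, j)` to `(i + a, σ_{i+a} j)`, i.e. first `ξ^a`
shifts every block up by `a`, and then `σ_k` permutes the coordinates within the `k`-th block. -/
def wrElt (d m : ℕ) (σ : ZMod d → Equiv.Perm (Fin m)) (a : ZMod d) :
    Equiv.Perm (ZMod d × Fin m) where
  toFun p := (p.1 + a, σ (p.1 + a) p.2)
  invFun p := (p.1 - a, (σ p.1)⁻¹ p.2)
  left_inv p := by simp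
  right_inv p := by simp

/-- An element `g` of the wreath product is elliptic if it has no nonzero fixed vector in
`V = {x ∈ ℂ^n : x_1 + ⋯ + x_n = 0}` (the action being by permutation of coordinates). -/
def IsElliptic (d m : ℕ) [NeZero d] (g : Equiv.Perm (ZMod d × Fin m)) : Prop :=
  ∀ v : ZMod d × Fin m → ℂ,
    (∑ p : ZMod d × Fin m, v p = 0) → (∀ p, v (g p) = v p) → v = 0

/-- Let `d, m ≥ 1` and `n = dm`.  If `η ∈ ℤ/dℤ` has order strictly smaller
than `d`, then for every `(σ_1, …, σ_d) ∈ (S_m)^d` the element `(σ_1, …, σ_d)·η` of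
`G = (S_m)^d ⋊ ℤ/dℤ` has a nonzero fixed vector in `V`, i.e. it is not elliptic. -/
theorem stmt17 (d m : ℕ) [NeZero d] (hd : 1 ≤ d) (hm : 1 ≤ m)
    (η : ZMod d) (hη : addOrderOf η < d)
    (σ : ZMod d → Equiv.Perm (Fin m)) :
    ¬ IsElliptic d m (wrElt d m σ η) := by
  classical
  intro hell
  set H := AddSubgroup.zmultiples η with hH
  set k := addOrderOf η with hk
  have hk_pos : 0 < k := addOrderOf_pos η
  have hdk : 0 < d - k := Nat.sub_pos_of_lt hη
  set c : ℂ := -(k : ℂ) / ((d : ℂ) - (k : ℂ)) with hc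
  set v : ZMod d × Fin m → ℂ := fun p => if p.1 ∈ H then 1 else c with hv
  -- cardinality of H as a filter
  have hcardH : (Finset.univ.filter (fun i : ZMod d => i ∈ H)).card = k := by
    rw [← Fintype.card_subtype]
    rw [hk, ← Nat.card_zmultiples η]
    exact (Nat.card_eq_fintype_card).symm
  have hdk_ne : (d : ℂ) - (k : ℂ) ≠ 0 := by
    intro h
    have : (d : ℂ) = (k : ℂ) := by linear_combination h
    have : d = k := by exact_mod_cast this
    omega
  -- sum over one block of indices
  have hsum1 : ∑ i : ZMod d, (if i ∈ H then (1 : ℂ) else c) = 0 := by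
    rw [Finset.sum_ite, Finset.sum_const, Finset.sum_const]
    have h2 : (Finset.univ.filter (fun i : ZMod d => ¬ i ∈ H)).card = d - k := by
      have := Finset.card_filter_add_card_filter_not
        (s := (Finset.univ : Finset (ZMod d))) (p := fun i : ZMod d => i ∈ H)
      rw [hcardH, Finset.card_univ, ZMod.card] at this
      omega
    rw [hcardH, h2, nsmul_eq_mul, nsmul_eq_mul, Nat.cast_sub hη.le, hc]
    field_simp
    ring
  have hsum : ∑ p : ZMod d × Fin m, v p = 0 := by
    rw [Fintype.sum_prod_type]
    calc (∑ i : ZMod d, ∑ j : Fin m, v (i, j))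
        = ∑ i : ZMod d, (m : ℂ) * (if i ∈ H then (1:ℂ) else c) := by
          refine Finset.sum_congr rfl fun i _ => ?_
          simp only [hv]
          by_cases hi : i ∈ H <;>
            simp [hi, Finset.sum_const, nsmul_eq_mul]
      _ = 0 := by rw [← Finset.mul_sum, hsum1, mul_zero]
  have hfix : ∀ p, v (wrElt d m σ η p) = v p := by
    intro p
    simp only [hv, wrElt, Equiv.coe_fn_mk]
    have : p.1 + η ∈ H ↔ p.1 ∈ H :=
      AddSubgroup.add_mem_cancel_right H (AddSubgroup.mem_zmultiples η)
    simp [this]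
  have := congrFun (hell v hsum hfix) (0, ⟨0, hm⟩)
  simp only [hv, Pi.zero_apply] at this
  rw [if_pos (AddSubgroup.zero_mem H)] at this
  exact one_ne_zero this
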